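/- arXiv:1511.09156 — 9 statements merged into one kernel-verified Lean document; each statement's English description precedes it below -/
import Mathlib

section
/- For every finite simple graph G with vertex set V and all subsets X, Y, T ⊆ V, one has |Γ_T(X)| + |Γ_T(Y)| ≥ |Γ_T(X ∩ Y)| + |Γ_T(X ∪ Y)|. -/
/-- `nbr G X` is Γ(X): the set of vertices outside `X` adjacent to a vertex of `X`. -/
def nbr {V : Type*} [Fintype V] [DecidableEq V] (G : SimpleGraph V) [DecidableRel G.Adj]
    (X : Finset V) : Finset V :=
  Finset.univ.filter (fun v => v ∉ X ∧ ∃ u ∈ X, G.Adj u v)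

lemma mem_nbr {V : Type*} [Fintype V] [DecidableEq V] (G : SimpleGraph V) [DecidableRel G.Adj]
    (X : Finset V) (v : V) : v ∈ nbr G X ↔ v ∉ X ∧ ∃ u ∈ X, G.Adj u v := by
  simp [nbr]

theorem stmt_1 {V : Type*} [Fintype V] [DecidableEq V]
    (G : SimpleGraph V) [DecidableRel G.Adj] (X Y T : Finset V) :
    (nbr G (X ∩ Y) ∩ T).card + (nbr G (X ∪ Y) ∩ T).card ≤
      (nbr G X ∩ T).card + (nbr G Y ∩ T).card := by
  set A := nbr G (X ∩ Y) ∩ T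
  set B := nbr G (X ∪ Y) ∩ T
  set C := nbr G X ∩ T
  set D := nbr G Y ∩ T
  have hUnion : A ∪ B ⊆ C ∪ D := by
    intro v hv
    rcases Finset.mem_union.mp hv with hv | hv
    · rcases Finset.mem_inter.mp hv with ⟨hn, hT⟩
      rcases (mem_nbr G _ v).mp hn with ⟨hvX, u, hu, hadj⟩
      rcases Finset.mem_inter.mp hu with ⟨huX, huY⟩
      rcases (by simpa using hvX : ¬(v ∈ X ∧ v ∈ Y)) with h
      by_cases hvx : v ∈ X
      · refine Finset.mem_union.mpr (Or.inr (Finset.mem_inter.mpr ⟨?_, hT⟩))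
        exact (mem_nbr G Y v).mpr ⟨fun hvy => h ⟨hvx, hvy⟩, u, huY, hadj⟩
      · refine Finset.mem_union.mpr (Or.inl (Finset.mem_inter.mpr ⟨?_, hT⟩))
        exact (mem_nbr G X v).mpr ⟨hvx, u, huX, hadj⟩
    · rcases Finset.mem_inter.mp hv with ⟨hn, hT⟩
      rcases (mem_nbr G _ v).mp hn with ⟨hvXY, u, hu, hadj⟩
      have hvX : v ∉ X := fun h => hvXY (Finset.mem_union.mpr (Or.inl h))
      have hvY : v ∉ Y := fun h => hvXY (Finset.mem_union.mpr (Or.inr h))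
      rcases Finset.mem_union.mp hu with huX | huY
      · exact Finset.mem_union.mpr (Or.inl (Finset.mem_inter.mpr
          ⟨(mem_nbr G X v).mpr ⟨hvX, u, huX, hadj⟩, hT⟩))
      · exact Finset.mem_union.mpr (Or.inr (Finset.mem_inter.mpr
          ⟨(mem_nbr G Y v).mpr ⟨hvY, u, huY, hadj⟩, hT⟩))
  have hInter : A ∩ B ⊆ C ∩ D := by
    intro v hv
    rcases Finset.mem_inter.mp hv with ⟨hA, hB⟩
    rcases Finset.mem_inter.mp hA with ⟨hnA, hT⟩
    rcases Finset.mem_inter.mp hB with ⟨hnB, _⟩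
    rcases (mem_nbr G _ v).mp hnA with ⟨_, u, hu, hadj⟩
    rcases Finset.mem_inter.mp hu with ⟨huX, huY⟩
    rcases (mem_nbr G _ v).mp hnB with ⟨hvXY, _⟩
    have hvX : v ∉ X := fun h => hvXY (Finset.mem_union.mpr (Or.inl h))
    have hvY : v ∉ Y := fun h => hvXY (Finset.mem_union.mpr (Or.inr h))
    exact Finset.mem_inter.mpr ⟨Finset.mem_inter.mpr
      ⟨(mem_nbr G X v).mpr ⟨hvX, u, huX, hadj⟩, hT⟩,
      Finset.mem_inter.mpr ⟨(mem_nbr G Y v).mpr ⟨hvY, u, huY, hadj⟩, hT⟩⟩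
  calc A.card + B.card = (A ∪ B).card + (A ∩ B).card :=
        (Finset.card_union_add_card_inter A B).symm
    _ ≤ (C ∪ D).card + (C ∩ D).card :=
        Nat.add_le_add (Finset.card_le_card hUnion) (Finset.card_le_card hInter)
    _ = C.card + D.card := Finset.card_union_add_card_inter C D
end

section
/- Let G be a finite simple graph with vertex set V, let k, m be positive integers with m ≥ k, and suppose: (a) |Γ(X)| ≥ k for every nonempty X ⊆ V with X⁺ ≠ V (G is k-connected); (b) T ⊆ V is an m-dominating set; (c) |Γ_T(Z)| ≥ k − 1 for every T-cut Z (T is (k−1)-connected). Then for every demand cut X, i.e., every T-cut X with |Γ_T(X)| = k − 1, there exists a T-path in G that covers X and has at most two inner vertices. -/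
/-- `cl G X` is X⁺ = X ∪ Γ(X). -/
def cl {V : Type*} [Fintype V] [DecidableEq V] (G : SimpleGraph V) [DecidableRel G.Adj]
    (X : Finset V) : Finset V :=
  X ∪ nbr G X

lemma mem_cl {V : Type*} [Fintype V] [DecidableEq V] (G : SimpleGraph V) [DecidableRel G.Adj]
    (X : Finset V) (v : V) : v ∈ cl G X ↔ v ∈ X ∨ v ∈ nbr G X := by
  simp [cl]

theorem stmt_3 {V : Type*} [Fintype V] [DecidableEq V]
    (G : SimpleGraph V) [DecidableRel G.Adj] (k m : ℕ) (hk : 1 ≤ k) (hkm : k ≤ m)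
    -- (a) G is k-connected
    (hGconn : ∀ X : Finset V, X.Nonempty → cl G X ≠ Finset.univ → k ≤ (nbr G X).card)
    -- (b) T is an m-dominating set
    (T : Finset V)
    (hdom : ∀ v : V, v ∉ T → m ≤ (T.filter (fun u => G.Adj v u)).card)
    -- (c) T is (k-1)-connected: |Γ_T(Z)| ≥ k-1 for every T-cut Z
    (hTconn : ∀ Z : Finset V, Z ⊆ T → Z.Nonempty → (T \ cl G Z).Nonempty →
      k - 1 ≤ (nbr G Z ∩ T).card) :
    -- for every demand cut X there is a T-path covering X with at most two inner nodes
    ∀ X : Finset V, X ⊆ T → X.Nonempty → (T \ cl G X).Nonempty →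
      (nbr G X ∩ T).card = k - 1 →
      ∃ (a b : V) (p : G.Walk a b), p.IsPath ∧ a ∈ X ∧ b ∈ T \ cl G X ∧
        (∀ w ∈ p.support, w ≠ a → w ≠ b → w ∉ T) ∧ p.length ≤ 3 := by
  intro X hXT hXne hYne hScard
  have hklt : k - 1 < k := Nat.sub_lt hk one_pos
  -- a vertex of T not in X and not in Γ_T(X) lies in Y = T \ cl G X
  have hmemY : ∀ t : V, t ∈ T → t ∉ X → t ∉ nbr G X ∩ T → t ∈ T \ cl G X := by
    intro t htT htX htS
    rw [Finset.mem_sdiff]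
    refine ⟨htT, ?_⟩
    rw [mem_cl]
    rintro (h | h)
    · exact htX h
    · exact htS (Finset.mem_inter.2 ⟨h, htT⟩)
  -- key fact 1: every vertex outside T has a neighbor in X ∪ Y
  have key1 : ∀ v : V, v ∉ T → ∃ t, G.Adj v t ∧ (t ∈ X ∨ t ∈ T \ cl G X) := by
    intro v hv
    by_contra h
    push_neg at h
    have hsub : T.filter (fun u => G.Adj v u) ⊆ nbr G X ∩ T := by
      intro t ht
      rw [Finset.mem_filter] at ht
      obtain ⟨htT, hadj⟩ := ht
      by_contra htS
      have := h t hadj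
      rcases this with ⟨htX, htY⟩
      exact htY (hmemY t htT htX htS)
    have := Finset.card_le_card hsub
    rw [hScard] at this
    have := le_trans (hdom v hv) this
    omega
  -- Y is nonempty, so cl G X ≠ univ, so |Γ(X)| ≥ k
  obtain ⟨b0, hb0⟩ := hYne
  have hb0' := hb0
  rw [Finset.mem_sdiff] at hb0'
  have hclne : cl G X ≠ Finset.univ := by
    intro h
    exact hb0'.2 (h ▸ Finset.mem_univ b0)
  have hGX : k ≤ (nbr G X).card := hGconn X hXne hclne
  -- there is u ∈ Γ(X) \ T
  have hexu : ∃ u ∈ nbr G X, u ∉ T := by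
    by_contra h
    push_neg at h
    have hsub : nbr G X ⊆ nbr G X ∩ T := fun u hu =>
      Finset.mem_inter.2 ⟨hu, h u hu⟩
    have := Finset.card_le_card hsub
    rw [hScard] at this
    omega
  obtain ⟨u0, hu0N, hu0T⟩ := hexu
  -- case split: does some u ∈ Γ(X)\T have a neighbor in Y?
  by_cases hcase : ∃ u ∈ nbr G X, u ∉ T ∧ ∃ b ∈ T \ cl G X, G.Adj u b
  · -- length-2 path a - u - b
    obtain ⟨u, huN, huT, b, hbY, hub⟩ := hcase
    rw [mem_nbr] at huN
    obtain ⟨huX, a, haX, hau⟩ := huN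
    have haT : a ∈ T := hXT haX
    have hbY' := hbY
    rw [Finset.mem_sdiff] at hbY'
    have hab : a ≠ b := by
      intro h
      exact hbY'.2 (h ▸ Finset.mem_union_left _ haX)
    have hua : u ≠ a := fun h => huT (h ▸ haT)
    have hubne : u ≠ b := fun h => huT (h ▸ hbY'.1)
    refine ⟨a, b, SimpleGraph.Walk.cons hau (SimpleGraph.Walk.cons hub SimpleGraph.Walk.nil),
      ?_, haX, hbY, ?_, ?_⟩
    · rw [SimpleGraph.Walk.isPath_def]
      simp [hab, hua.symm, hubne]
    · intro w hw hwa hwb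
      simp [SimpleGraph.Walk.support_cons] at hw
      rcases hw with h | h | h
      · exact absurd h hwa
      · exact h ▸ huT
      · exact absurd h hwb
    · simp
  · -- no u works directly; use connectivity of D = X ∪ (Γ(X) \ T)
    push_neg at hcase
    set D : Finset V := X ∪ (nbr G X \ T) with hD
    have hDne : D.Nonempty := hXne.mono Finset.subset_union_left
    -- b0 ∉ cl G D
    have hb0clD : b0 ∉ cl G D := by
      rw [mem_cl]
      rintro (h | h)
      · rw [Finset.mem_union] at h
        rcases h with h | h
        · exact hb0'.2 (Finset.mem_union_left _ h)
        · exact (Finset.mem_sdiff.1 h).2 hb0'.1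
      · rw [mem_nbr] at h
        obtain ⟨_, d, hdD, hdb⟩ := h
        rw [hD, Finset.mem_union] at hdD
        rcases hdD with h | h
        · -- d ∈ X so b0 ∈ Γ(X), contradiction with b0 ∉ cl X
          exact hb0'.2 (mem_cl G X b0 |>.2 (Or.inr ((mem_nbr G X b0).2
            ⟨fun hb0X => hb0'.2 (Finset.mem_union_left _ hb0X), d, h, hdb⟩)))
        · rw [Finset.mem_sdiff] at h
          exact hcase d h.1 h.2 b0 hb0 hdb
    have hclDne : cl G D ≠ Finset.univ := fun h => hb0clD (h ▸ Finset.mem_univ b0)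
    have hGD : k ≤ (nbr G D).card := hGconn D hDne hclDne
    -- pick w ∈ Γ(D) \ S
    have hexw : ∃ w ∈ nbr G D, w ∉ nbr G X ∩ T := by
      by_contra h
      push_neg at h
      have hsub : nbr G D ⊆ nbr G X ∩ T := fun w hw => h w hw
      have := Finset.card_le_card hsub
      rw [hScard] at this
      omega
    obtain ⟨w, hwN, hwS⟩ := hexw
    rw [mem_nbr] at hwN
    obtain ⟨hwD, d, hdD, hdw⟩ := hwN
    -- w is not adjacent to X via membership in Γ(X): if d ∈ X then w ∈ Γ(X) ⊆ S ∪ D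
    have hdA : d ∈ nbr G X \ T := by
      rw [hD, Finset.mem_union] at hdD
      rcases hdD with h | h
      · exfalso
        have hwX : w ∉ X := fun hwX => hwD (Finset.mem_union_left _ hwX)
        have hwGX : w ∈ nbr G X := (mem_nbr G X w).2 ⟨hwX, d, h, hdw⟩
        by_cases hwT : w ∈ T
        · exact hwS (Finset.mem_inter.2 ⟨hwGX, hwT⟩)
        · exact hwD (Finset.mem_union_right _ (Finset.mem_sdiff.2 ⟨hwGX, hwT⟩))
      · exact h
    rw [Finset.mem_sdiff] at hdA
    obtain ⟨hdGX, hdT⟩ := hdA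
    -- w ∉ T
    have hwT : w ∉ T := by
      intro hwT
      have hwX : w ∉ X := fun hwX => hwD (Finset.mem_union_left _ hwX)
      have hwY : w ∈ T \ cl G X := hmemY w hwT hwX hwS
      exact hcase d hdGX hdT w hwY hdw
    -- w has a neighbor in X ∪ Y; it can't be in X
    obtain ⟨t, hwt, ht⟩ := key1 w hwT
    rcases ht with htX | htY
    · exfalso
      have hwX : w ∉ X := fun hwX => hwD (Finset.mem_union_left _ hwX)
      have hwGX : w ∈ nbr G X := (mem_nbr G X w).2 ⟨hwX, t, htX, hwt.symm⟩
      exact hwD (Finset.mem_union_right _ (Finset.mem_sdiff.2 ⟨hwGX, hwT⟩))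
    · -- build path a - d - w - t
      rw [mem_nbr] at hdGX
      obtain ⟨hdX, a, haX, had⟩ := hdGX
      have haT : a ∈ T := hXT haX
      have htY' := htY
      rw [Finset.mem_sdiff] at htY'
      have hat : a ≠ t := fun h => htY'.2 (h ▸ Finset.mem_union_left _ haX)
      have hda : d ≠ a := fun h => hdT (h ▸ haT)
      have hdt : d ≠ t := fun h => hdT (h ▸ htY'.1)
      have hwa : w ≠ a := fun h => hwT (h ▸ haT)
      have hwtne : w ≠ t := fun h => hwT (h ▸ htY'.1)
      have hdwne : d ≠ w := fun h =>
        hwD (h ▸ Finset.mem_union_right _ (Finset.mem_sdiff.2 ⟨(mem_nbr G X d).2 ⟨hdX, a, haX, had⟩, hdT⟩))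
      refine ⟨a, t, SimpleGraph.Walk.cons had (SimpleGraph.Walk.cons hdw
        (SimpleGraph.Walk.cons hwt SimpleGraph.Walk.nil)), ?_, haX, htY, ?_, ?_⟩
      · rw [SimpleGraph.Walk.isPath_def]
        simp [hat, hda, hdt, hwa, hwtne, hdwne, hda.symm, hwa.symm]
      · intro v hv hva hvt
        simp [SimpleGraph.Walk.support_cons] at hv
        rcases hv with h | h | h | h
        · exact absurd h hva
        · exact h ▸ hdT
        · exact h ▸ hwT
        · exact absurd h hvt
      · simp
end

section
/- Let G be a finite simple graph with vertex set V, let k ≤ m be positive integers, and let T ⊆ V be an m-dominating set with |Γ_T(Z)| ≥ k − 1 for every T-cut Z (T is (k−1)-connected). Let S ⊆ V \ T. If X is a (T ∪ S)-cut with |Γ_{T∪S}(X)| ≤ k − 1, then X ∩ T is a demand cut, i.e., X ∩ T is a T-cut and |Γ_T(X ∩ T)| = k − 1. -/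
theorem stmt_4 {V : Type*} [Fintype V] [DecidableEq V]
    (G : SimpleGraph V) [DecidableRel G.Adj] (k m : ℕ) (hk : 1 ≤ k) (hkm : k ≤ m)
    -- T is an m-dominating set
    (T : Finset V)
    (hdom : ∀ v : V, v ∉ T → m ≤ (T.filter (fun u => G.Adj v u)).card)
    -- T is (k-1)-connected: |Γ_T(Z)| ≥ k-1 for every T-cut Z
    (hTconn : ∀ Z : Finset V, Z ⊆ T → Z.Nonempty → (T \ cl G Z).Nonempty →
      k - 1 ≤ (nbr G Z ∩ T).card)
    (S : Finset V) (hS : S ⊆ Finset.univ \ T)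
    -- X is a (T ∪ S)-cut with |Γ_{T∪S}(X)| ≤ k-1
    (X : Finset V) (hXsub : X ⊆ T ∪ S) (hXne : X.Nonempty)
    (hXcut : ((T ∪ S) \ cl G X).Nonempty)
    (hXsmall : (nbr G X ∩ (T ∪ S)).card ≤ k - 1) :
    -- X ∩ T is a demand cut
    (X ∩ T ⊆ T ∧ (X ∩ T).Nonempty ∧ (T \ cl G (X ∩ T)).Nonempty) ∧
      (nbr G (X ∩ T) ∩ T).card = k - 1 := by
  have key : ∀ w : V, w ∉ T → (∀ u ∈ T, G.Adj w u → u ∈ nbr G X ∩ (T ∪ S)) → False := by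
    intro w hw hsub
    have h1 : (T.filter (fun u => G.Adj w u)).card ≤ (nbr G X ∩ (T ∪ S)).card := by
      apply Finset.card_le_card
      intro u hu
      simp only [Finset.mem_filter] at hu
      exact hsub u hu.1 hu.2
    have h2 := hdom w hw
    omega
  have hne : (X ∩ T).Nonempty := by
    by_contra h
    rw [Finset.not_nonempty_iff_eq_empty] at h
    obtain ⟨v, hv⟩ := hXne
    have hvT : v ∉ T := fun hvT =>
      (Finset.eq_empty_iff_forall_notMem.mp h v) (Finset.mem_inter.mpr ⟨hv, hvT⟩)
    apply key v hvT
    intro u hu hadj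
    refine Finset.mem_inter.mpr ⟨?_, Finset.mem_union_left _ hu⟩
    simp only [nbr, Finset.mem_filter, Finset.mem_univ, true_and]
    refine ⟨fun hux => ?_, v, hv, hadj⟩
    exact (Finset.eq_empty_iff_forall_notMem.mp h u) (Finset.mem_inter.mpr ⟨hux, hu⟩)
  have hXT_sub_X : X ∩ T ⊆ X := Finset.inter_subset_left
  have hclsub : ∀ u, u ∈ cl G (X ∩ T) → u ∉ X → u ∈ nbr G X := by
    intro u hu hux
    rw [cl, Finset.mem_union] at hu
    rcases hu with h | h
    · exact absurd (hXT_sub_X h) hux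
    · simp only [nbr, Finset.mem_filter, Finset.mem_univ, true_and] at h ⊢
      obtain ⟨-, x, hx, hadj⟩ := h
      exact ⟨hux, x, hXT_sub_X hx, hadj⟩
  have hcut : (T \ cl G (X ∩ T)).Nonempty := by
    obtain ⟨w, hw⟩ := hXcut
    rw [Finset.mem_sdiff, cl] at hw
    have hwx : w ∉ X := fun h => hw.2 (Finset.mem_union_left _ h)
    by_cases hwT : w ∈ T
    · refine ⟨w, Finset.mem_sdiff.mpr ⟨hwT, fun hwc => ?_⟩⟩
      exact hw.2 (Finset.mem_union_right _ (hclsub w hwc hwx))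
    · by_contra h
      rw [Finset.not_nonempty_iff_eq_empty, Finset.sdiff_eq_empty_iff_subset] at h
      apply key w hwT
      intro u hu hadj
      refine Finset.mem_inter.mpr ⟨?_, Finset.mem_union_left _ hu⟩
      have hux : u ∉ X := by
        intro hux
        apply hw.2
        apply Finset.mem_union_right
        simp only [nbr, Finset.mem_filter, Finset.mem_univ, true_and]
        exact ⟨hwx, u, hux, hadj.symm⟩
      exact hclsub u (h hu) hux
  refine ⟨⟨Finset.inter_subset_right, hne, hcut⟩,
    le_antisymm ?_ (hTconn (X ∩ T) Finset.inter_subset_right hne hcut)⟩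
  refine le_trans (Finset.card_le_card ?_) hXsmall
  intro v hv
  rw [Finset.mem_inter] at hv
  refine Finset.mem_inter.mpr ⟨?_, Finset.mem_union_left _ hv.2⟩
  obtain ⟨hv1, hv2⟩ := hv
  simp only [nbr, Finset.mem_filter, Finset.mem_univ, true_and] at hv1 ⊢
  obtain ⟨hvn, x, hx, hadj⟩ := hv1
  exact ⟨fun hvx => hvn (Finset.mem_inter.mpr ⟨hvx, hv2⟩), x, hXT_sub_X hx, hadj⟩
end

section
/- Let G be a finite simple graph with vertex set V, let k ≤ m be positive integers, and let T ⊆ V be an m-dominating set with |Γ_T(Z)| ≥ k − 1 for every T-cut Z (T is (k−1)-connected). Let S ⊆ V \ T. If every demand cut X (every T-cut X with |Γ_T(X)| = k − 1) is covered by some T-path all of whose vertices lie in T ∪ S, then |Γ_{T∪S}(Y)| ≥ k for every (T ∪ S)-cut Y; that is, the subgraph of G induced by T ∪ S is k-connected. -/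
/-- Crossing lemma: a walk from a vertex satisfying `P` to one not satisfying `P`
contains an edge `u v` with `P u` and `¬ P v`, and `u` on the support. -/
lemma walk_cross {V : Type*} {G : SimpleGraph V} (P : V → Prop) [DecidablePred P] :
    ∀ {a b : V} (p : G.Walk a b), P a → ¬ P b →
      ∃ u v, G.Adj u v ∧ u ∈ p.support ∧ P u ∧ ¬ P v := by
  intro a b p
  induction p with
  | nil => intro h h'; exact absurd h h'
  | @cons a c b h q ih =>
    intro ha hb
    by_cases hc : P c
    · obtain ⟨u, v, huv, hus, hu, hv⟩ := ih hc hb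
      exact ⟨u, v, huv, by simp [hus], hu, hv⟩
    · exact ⟨a, c, h, by simp, ha, hc⟩

theorem stmt_5 {V : Type*} [Fintype V] [DecidableEq V]
    (G : SimpleGraph V) [DecidableRel G.Adj] (k m : ℕ) (hk : 1 ≤ k) (hkm : k ≤ m)
    -- T is an m-dominating set
    (T : Finset V)
    (hdom : ∀ v : V, v ∉ T → m ≤ (T.filter (fun u => G.Adj v u)).card)
    -- T is (k-1)-connected: |Γ_T(Z)| ≥ k-1 for every T-cut Z
    (hTconn : ∀ Z : Finset V, Z ⊆ T → Z.Nonempty → (T \ cl G Z).Nonempty →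
      k - 1 ≤ (nbr G Z ∩ T).card)
    (S : Finset V) (hS : S ⊆ Finset.univ \ T)
    -- every demand cut is covered by a T-path whose vertices all lie in T ∪ S
    (hcov : ∀ X : Finset V, X ⊆ T → X.Nonempty → (T \ cl G X).Nonempty →
      (nbr G X ∩ T).card = k - 1 →
      ∃ (a b : V) (p : G.Walk a b), p.IsPath ∧ a ∈ X ∧ b ∈ T \ cl G X ∧
        (∀ w ∈ p.support, w ≠ a → w ≠ b → w ∉ T) ∧ (∀ w ∈ p.support, w ∈ T ∪ S)) :
    -- then G[T ∪ S] is k-connected: |Γ_{T∪S}(Y)| ≥ k for every (T ∪ S)-cut Y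
    ∀ Y : Finset V, Y ⊆ T ∪ S → Y.Nonempty → ((T ∪ S) \ cl G Y).Nonempty →
      k ≤ (nbr G Y ∩ (T ∪ S)).card := by
  intro Y hYsub hYne hYcut
  by_contra hlt
  push_neg at hlt
  have hsubTS : nbr G Y ∩ T ⊆ nbr G Y ∩ (T ∪ S) := by
    intro v hv
    simp only [Finset.mem_inter, Finset.mem_union] at hv ⊢
    exact ⟨hv.1, Or.inl hv.2⟩
  -- Case: T ⊆ cl G Y
  by_cases hTB : (T \ cl G Y).Nonempty
  swap
  · -- pick an element of (T ∪ S) \ cl G Y; it is outside T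
    obtain ⟨b0, hb0⟩ := hYcut
    rw [Finset.mem_sdiff] at hb0
    have hb0T : b0 ∉ T := by
      intro hb0T
      exact hTB ⟨b0, Finset.mem_sdiff.mpr ⟨hb0T, hb0.2⟩⟩
    have hTcl : T ⊆ cl G Y := by
      rw [Finset.not_nonempty_iff_eq_empty, Finset.sdiff_eq_empty_iff_subset] at hTB
      exact hTB
    have hsub : T.filter (fun u => G.Adj b0 u) ⊆ nbr G Y ∩ T := by
      intro t ht
      rw [Finset.mem_filter] at ht
      have htY : t ∉ Y := by
        intro htY
        apply hb0.2
        rw [cl, Finset.mem_union]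
        right
        simp only [nbr, Finset.mem_filter, Finset.mem_univ, true_and]
        refine ⟨fun hb0Y => hb0.2 (Finset.mem_union_left _ hb0Y), t, htY, ht.2.symm⟩
      have htcl := hTcl ht.1
      rw [cl, Finset.mem_union] at htcl
      rcases htcl with h | h
      · exact absurd h htY
      · exact Finset.mem_inter.mpr ⟨h, ht.1⟩
    have := (hdom b0 hb0T).trans (Finset.card_le_card hsub)
    have := Finset.card_le_card hsubTS
    omega
  -- Case: Y ∩ T = ∅
  by_cases hX : (Y ∩ T).Nonempty
  swap
  · obtain ⟨s, hs⟩ := hYne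
    have hsT : s ∉ T := fun h => hX ⟨s, Finset.mem_inter.mpr ⟨hs, h⟩⟩
    have hsub : T.filter (fun u => G.Adj s u) ⊆ nbr G Y ∩ T := by
      intro t ht
      rw [Finset.mem_filter] at ht
      have htY : t ∉ Y := by
        intro htY
        exact hX ⟨t, Finset.mem_inter.mpr ⟨htY, ht.1⟩⟩
      refine Finset.mem_inter.mpr ⟨?_, ht.1⟩
      simp only [nbr, Finset.mem_filter, Finset.mem_univ, true_and]
      exact ⟨htY, s, hs, ht.2⟩
    have := (hdom s hsT).trans (Finset.card_le_card hsub)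
    have := Finset.card_le_card hsubTS
    omega
  -- Main case
  set X := Y ∩ T with hXdef
  have hXT : X ⊆ T := Finset.inter_subset_right
  have hXY : X ⊆ Y := Finset.inter_subset_left
  have hclXY : cl G X ⊆ cl G Y := by
    intro v hv
    rw [cl, Finset.mem_union] at hv ⊢
    rcases hv with h | h
    · exact Or.inl (hXY h)
    · simp only [nbr, Finset.mem_filter, Finset.mem_univ, true_and] at h
      obtain ⟨hvX, u, huX, hu⟩ := h
      by_cases hvY : v ∈ Y
      · exact Or.inl hvY
      · right
        simp only [nbr, Finset.mem_filter, Finset.mem_univ, true_and]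
        exact ⟨hvY, u, hXY huX, hu⟩
  have hTcutX : (T \ cl G X).Nonempty := by
    obtain ⟨t, ht⟩ := hTB
    rw [Finset.mem_sdiff] at ht
    exact ⟨t, Finset.mem_sdiff.mpr ⟨ht.1, fun h => ht.2 (hclXY h)⟩⟩
  have hsub1 : nbr G X ∩ T ⊆ nbr G Y ∩ T := by
    intro v hv
    rw [Finset.mem_inter] at hv ⊢
    refine ⟨?_, hv.2⟩
    obtain ⟨hvnbr, hvT⟩ := hv
    simp only [nbr, Finset.mem_filter, Finset.mem_univ, true_and] at hvnbr ⊢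
    obtain ⟨hvX, u, huX, hu⟩ := hvnbr
    refine ⟨fun hvY => hvX (Finset.mem_inter.mpr ⟨hvY, hvT⟩), u, hXY huX, hu⟩
  have hk1 := hTconn X hXT hX hTcutX
  have hc1 := Finset.card_le_card hsub1
  have hc2 := Finset.card_le_card hsubTS
  have hcard : (nbr G X ∩ T).card = k - 1 := by omega
  have heq1 : nbr G X ∩ T = nbr G Y ∩ T :=
    Finset.eq_of_subset_of_card_le hsub1 (by omega)
  have heq2 : nbr G Y ∩ T = nbr G Y ∩ (T ∪ S) :=
    Finset.eq_of_subset_of_card_le hsubTS (by omega)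
  obtain ⟨a, b, p, hp, haX, hbB, hinner, hTS⟩ := hcov X hXT hX hTcutX hcard
  rw [Finset.mem_sdiff] at hbB
  have haY : a ∈ Y := hXY haX
  have hacl : a ∈ cl G Y := Finset.mem_union_left _ haY
  have hbcl : b ∉ cl G Y := by
    intro h
    rw [cl, Finset.mem_union] at h
    apply hbB.2
    rcases h with h | h
    · exact Finset.mem_union_left _ (Finset.mem_inter.mpr ⟨h, hbB.1⟩)
    · have : b ∈ nbr G X ∩ T := by
        rw [heq1]; exact Finset.mem_inter.mpr ⟨h, hbB.1⟩
      exact Finset.mem_union_right _ (Finset.mem_inter.mp this).1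
  obtain ⟨u, v, huv, hus, hu, hv⟩ := walk_cross (fun w => w ∈ cl G Y) p hacl hbcl
  have hvY : v ∉ Y := fun h => hv (Finset.mem_union_left _ h)
  have huY : u ∉ Y := by
    intro h
    apply hv
    rw [cl, Finset.mem_union]
    right
    simp only [nbr, Finset.mem_filter, Finset.mem_univ, true_and]
    exact ⟨hvY, u, h, huv⟩
  have hunbr : u ∈ nbr G Y := by
    rw [cl, Finset.mem_union] at hu
    tauto
  have huT : u ∈ T := by
    have : u ∈ nbr G Y ∩ T := by
      rw [heq2]
      exact Finset.mem_inter.mpr ⟨hunbr, hTS u hus⟩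
    exact (Finset.mem_inter.mp this).2
  rcases eq_or_ne u a with rfl | hua
  · exact huY haY
  rcases eq_or_ne u b with rfl | hub
  · exact hbcl hu
  exact hinner u hus hua hub huT
end

section
/- Let H be a finite simple graph and let d be a nonnegative integer. If the edges of H can be oriented so that every vertex has in-degree at most d, then H is (2d+1)-colorable, i.e., its chromatic number is at most 2d + 1. -/
open Finset

lemma stmt_13_aux (d : ℕ) : ∀ (n : ℕ) (V : Type*) [Fintype V] (H : SimpleGraph V)
    (A : V → V → Prop),
    (∀ u v : V, A u v → H.Adj u v) →
    (∀ u v : V, A u v → ¬ A v u) →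
    (∀ u v : V, H.Adj u v → A u v ∨ A v u) →
    (∀ v : V, {u | A u v}.ncard ≤ d) →
    Fintype.card V ≤ n → H.Colorable (2 * d + 1) := by
  intro n
  induction n with
  | zero =>
    intro V _ H A hsub hasym hcover hdeg hcard
    have : IsEmpty V := Fintype.card_eq_zero_iff.mp (Nat.le_zero.mp hcard)
    exact ⟨SimpleGraph.Coloring.mk (fun v => this.elim v) (fun {a} => this.elim a)⟩
  | succ n ih =>
    intro V _ H A hsub hasym hcover hdeg hcard
    classical
    by_cases hne : Nonempty V
    · have hdeg' : ∀ v : V, (univ.filter (fun u => A u v)).card ≤ d := by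
        intro v
        have := hdeg v
        rwa [Set.ncard_eq_toFinset_card', Set.toFinset_setOf] at this
      -- degree sum bound
      have hsum : ∑ v : V, (univ.filter (fun u => H.Adj v u)).card
          ≤ 2 * d * Fintype.card V := by
        have h1 : ∀ v : V, (univ.filter (fun u => H.Adj v u)).card ≤
            (univ.filter (fun u => A u v)).card + (univ.filter (fun u => A v u)).card := by
          intro v
          calc (univ.filter (fun u => H.Adj v u)).card
              ≤ ((univ.filter (fun u => A u v)) ∪ (univ.filter (fun u => A v u))).card := by
                apply Finset.card_le_card
                intro u hu
                simp only [mem_filter, mem_union, mem_univ, true_and] at *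
                rcases hcover v u hu with h | h
                · exact Or.inr h
                · exact Or.inl h
            _ ≤ _ := Finset.card_union_le _ _
        have h2 : ∑ v : V, (univ.filter (fun u => A v u)).card
            = ∑ v : V, (univ.filter (fun u => A u v)).card := by
          simp only [Finset.card_filter]
          exact Finset.sum_comm
        calc ∑ v : V, (univ.filter (fun u => H.Adj v u)).card
            ≤ ∑ v : V, ((univ.filter (fun u => A u v)).card
                + (univ.filter (fun u => A v u)).card) :=
              Finset.sum_le_sum fun v _ => h1 v
          _ = ∑ v : V, (univ.filter (fun u => A u v)).card
                + ∑ v : V, (univ.filter (fun u => A v u)).card := Finset.sum_add_distrib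
          _ = 2 * ∑ v : V, (univ.filter (fun u => A u v)).card := by rw [h2]; ring
          _ ≤ 2 * (d * Fintype.card V) := by
              apply Nat.mul_le_mul_left
              calc ∑ v : V, (univ.filter (fun u => A u v)).card
                  ≤ ∑ _v : V, d := Finset.sum_le_sum fun v _ => hdeg' v
                _ = d * Fintype.card V := by simp [mul_comm]
          _ = 2 * d * Fintype.card V := by ring
      have hexv : ∃ v : V, (univ.filter (fun u => H.Adj v u)).card ≤ 2 * d := by
        by_contra hc
        push_neg at hc
        have : (2 * d + 1) * Fintype.card V ≤ 2 * d * Fintype.card V := by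
          calc (2 * d + 1) * Fintype.card V = ∑ _v : V, (2 * d + 1) := by simp [mul_comm]
            _ ≤ ∑ v : V, (univ.filter (fun u => H.Adj v u)).card :=
                Finset.sum_le_sum fun v _ => hc v
            _ ≤ _ := hsum
        have hpos : 0 < Fintype.card V := Fintype.card_pos
        nlinarith
      obtain ⟨v, hv⟩ := hexv
      -- induced graph on V \ {v}
      let S := {u : V // u ≠ v}
      let H' : SimpleGraph S := H.comap (fun u => (u : V))
      let A' : S → S → Prop := fun a b => A a.val b.val
      have hcardS : Fintype.card S ≤ n := by
        have : Fintype.card S < Fintype.card V :=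
          Fintype.card_subtype_lt (p := fun u => u ≠ v) (x := v) (by simp)
        omega
      obtain ⟨C'⟩ := ih S H' A'
        (fun a b h => hsub a.val b.val h)
        (fun a b h => hasym a.val b.val h)
        (fun a b h => hcover a.val b.val h)
        (by
          intro w
          have hle : {u : S | A' u w}.ncard ≤ {u : V | A u w.val}.ncard := by
            refine Set.ncard_le_ncard_of_injOn (fun u : S => (u : V)) ?_ ?_ (Set.toFinite _)
            · intro u hu; exact hu
            · exact fun a _ b _ h => Subtype.val_injective h
          exact hle.trans (hdeg w.val))
        hcardS
      -- choose a free color for v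
      let used : Finset (Fin (2 * d + 1)) :=
        (univ.filter (fun u : S => H.Adj v u.val)).image C'
      have husedcard : used.card ≤ 2 * d := by
        calc used.card ≤ (univ.filter (fun u : S => H.Adj v u.val)).card :=
              Finset.card_image_le
          _ ≤ (univ.filter (fun u : V => H.Adj v u)).card :=
              Finset.card_le_card_of_injOn (fun u => (u : V))
                (by intro u hu
                    simp only [mem_coe, mem_filter, mem_univ, true_and] at *
                    exact hu)
                (fun a _ b _ h => Subtype.val_injective h)
          _ ≤ 2 * d := hv
      obtain ⟨c, hc⟩ : ∃ c, c ∉ used := by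
        by_contra h
        push_neg at h
        have : used = univ := Finset.eq_univ_iff_forall.mpr h
        rw [this, Finset.card_univ, Fintype.card_fin] at husedcard
        omega
      refine ⟨SimpleGraph.Coloring.mk
        (fun w => if h : w = v then c else C' ⟨w, h⟩) ?_⟩
      intro a b hab
      by_cases ha : a = v <;> by_cases hb : b = v
      · exact absurd (ha ▸ hb ▸ hab) (H.irrefl)
      · simp only [dif_pos ha, dif_neg hb]
        intro h
        apply hc
        rw [h]
        exact Finset.mem_image.mpr ⟨⟨b, hb⟩, by simp [ha ▸ hab], rfl⟩
      · simp only [dif_neg ha, dif_pos hb]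
        intro h
        apply hc
        rw [← h]
        exact Finset.mem_image.mpr ⟨⟨a, ha⟩, by simp [(hb ▸ hab).symm], rfl⟩
      · simp only [dif_neg ha, dif_neg hb]
        exact C'.valid hab
    · have : IsEmpty V := not_nonempty_iff.mp hne
      exact ⟨SimpleGraph.Coloring.mk (fun v => this.elim v) (fun {a} => this.elim a)⟩

theorem stmt_13 {V : Type*} [Fintype V] (H : SimpleGraph V) (d : ℕ)
    -- A is an orientation of the edges of H
    (A : V → V → Prop) [DecidableRel A]
    (hsub : ∀ u v : V, A u v → H.Adj u v)
    (hasym : ∀ u v : V, A u v → ¬ A v u)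
    (hcover : ∀ u v : V, H.Adj u v → A u v ∨ A v u)
    -- every vertex has in-degree at most d
    (hdeg : ∀ v : V, (Finset.univ.filter (fun u => A u v)).card ≤ d) :
    H.Colorable (2 * d + 1) := by
  apply stmt_13_aux d (Fintype.card V) V H A hsub hasym hcover ?_ le_rfl
  intro v
  rw [Set.ncard_eq_toFinset_card', Set.toFinset_setOf]
  exact hdeg v
end

section
/- Let G be a finite simple graph with vertex set V, let T ⊆ V, and let F be an uncrossable family of subsets of V with ∅ ∉ F. Let X, Y ∈ F. If X is minimal in F (with respect to inclusion), then either X ⊆ Y or (X ∩ Y⁺ = ∅ and X⁺ ∩ Y = ∅). In particular, if both X and Y are minimal in F and X ≠ Y, then X ∩ Y⁺ = ∅ = X⁺ ∩ Y. -/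
/-- A family F of subsets of V is uncrossable with respect to T. -/
def Uncrossable {V : Type*} [Fintype V] [DecidableEq V] (G : SimpleGraph V)
    [DecidableRel G.Adj] (T : Finset V) (F : Set (Finset V)) : Prop :=
  (∀ X ∈ F, ∀ Y ∈ F, (X ∩ Y ∈ F ∧ X ∪ Y ∈ F) ∨ (X \ cl G Y ∈ F ∧ Y \ cl G X ∈ F)) ∧
  (∀ X ∈ F, ∀ Y ∈ F, (X ∩ Y ∩ T).Nonempty → X ∩ Y ∈ F ∧ X ∪ Y ∈ F)

lemma cl_symm {V : Type*} [Fintype V] [DecidableEq V] (G : SimpleGraph V) [DecidableRel G.Adj]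
    (X Y : Finset V) (h : X ∩ cl G Y = ∅) : cl G X ∩ Y = ∅ := by
  have hd : ∀ v, v ∈ X → v ∉ cl G Y := by
    intro v hv hv'
    have : v ∈ X ∩ cl G Y := Finset.mem_inter.mpr ⟨hv, hv'⟩
    simp [h] at this
  ext v
  simp only [Finset.mem_inter, Finset.notMem_empty, iff_false, not_and]
  intro hv hvY
  rcases Finset.mem_union.mp hv with h1 | h1
  · exact hd v h1 (Finset.mem_union_left _ hvY)
  · simp only [nbr, Finset.mem_filter] at h1
    obtain ⟨-, -, u, huX, hadj⟩ := h1
    have huY : u ∉ Y := fun hu => hd u huX (Finset.mem_union_left _ hu)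
    refine hd u huX (Finset.mem_union_right _ ?_)
    simp only [nbr, Finset.mem_filter]
    exact ⟨Finset.mem_univ _, huY, v, hvY, hadj.symm⟩

theorem stmt_15 {V : Type*} [Fintype V] [DecidableEq V]
    (G : SimpleGraph V) [DecidableRel G.Adj] (T : Finset V)
    (F : Set (Finset V)) (hF : Uncrossable G T F) (hne : (∅ : Finset V) ∉ F)
    (X Y : Finset V) (hX : X ∈ F) (hY : Y ∈ F)
    (hmin : ∀ Z ∈ F, Z ⊆ X → Z = X) :
    (X ⊆ Y ∨ (X ∩ cl G Y = ∅ ∧ cl G X ∩ Y = ∅)) ∧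
    ((∀ Z ∈ F, Z ⊆ Y → Z = Y) → X ≠ Y → X ∩ cl G Y = ∅ ∧ cl G X ∩ Y = ∅) := by
  rcases hF.1 X hX Y hY with ⟨h1, -⟩ | ⟨h1, -⟩
  · have hXY : X ⊆ Y := by
      have := hmin _ h1 Finset.inter_subset_left
      intro v hv
      rw [← this] at hv
      exact (Finset.mem_inter.mp hv).2
    refine ⟨Or.inl hXY, fun hminY hne' => absurd (hminY X hX hXY) hne'⟩
  · have heq : X \ cl G Y = X := hmin _ h1 (Finset.sdiff_subset)
    have hdisj : X ∩ cl G Y = ∅ := by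
      have := Finset.sdiff_eq_self_iff_disjoint.mp heq
      exact Finset.disjoint_iff_inter_eq_empty.mp this
    exact ⟨Or.inr ⟨hdisj, cl_symm G X Y hdisj⟩, fun _ _ => ⟨hdisj, cl_symm G X Y hdisj⟩⟩
end

section
/- Let G be a finite simple graph with vertex set V and let T ⊆ V. If F is an uncrossable family of subsets of V, then for any S ⊆ V the family F_S := {X ∈ F : S ∩ Γ(X) = ∅} is also uncrossable. -/
theorem stmt_16 {V : Type*} [Fintype V] [DecidableEq V]
    (G : SimpleGraph V) [DecidableRel G.Adj] (T : Finset V)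
    (F : Set (Finset V)) (hF : Uncrossable G T F) (S : Finset V) :
    Uncrossable G T {X ∈ F | S ∩ nbr G X = ∅} := by
  have hmem : ∀ (X : Finset V) (v : V), v ∈ nbr G X ↔ v ∉ X ∧ ∃ u ∈ X, G.Adj u v := by
    intro X v; simp [nbr]
  -- subset lemmas
  have hinter : ∀ X Y : Finset V, nbr G (X ∩ Y) ⊆ nbr G X ∪ nbr G Y := by
    intro X Y v hv
    rw [hmem] at hv
    obtain ⟨hvn, u, hu, hadj⟩ := hv
    simp only [Finset.mem_inter] at hu hvn
    push_neg at hvn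
    rcases Decidable.em (v ∈ X) with hvX | hvX
    · exact Finset.mem_union_right _ ((hmem _ _).2 ⟨hvn hvX, u, hu.2, hadj⟩)
    · exact Finset.mem_union_left _ ((hmem _ _).2 ⟨hvX, u, hu.1, hadj⟩)
  have hunion : ∀ X Y : Finset V, nbr G (X ∪ Y) ⊆ nbr G X ∪ nbr G Y := by
    intro X Y v hv
    rw [hmem] at hv
    obtain ⟨hvn, u, hu, hadj⟩ := hv
    simp only [Finset.mem_union] at hu hvn
    push_neg at hvn
    rcases hu with hu | hu
    · exact Finset.mem_union_left _ ((hmem _ _).2 ⟨hvn.1, u, hu, hadj⟩)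
    · exact Finset.mem_union_right _ ((hmem _ _).2 ⟨hvn.2, u, hu, hadj⟩)
  have hdiff : ∀ X Y : Finset V, nbr G (X \ cl G Y) ⊆ nbr G X ∪ nbr G Y := by
    intro X Y v hv
    rw [hmem] at hv
    obtain ⟨hvn, u, hu, hadj⟩ := hv
    simp only [Finset.mem_sdiff] at hu
    rcases Decidable.em (v ∈ X) with hvX | hvX
    · -- v ∈ X, v ∉ X \ cl G Y ⇒ v ∈ cl G Y
      have hvcl : v ∈ cl G Y := by
        by_contra h
        exact hvn (Finset.mem_sdiff.2 ⟨hvX, h⟩)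
      rcases Finset.mem_union.1 hvcl with hvY | hvY
      · -- then u ∈ nbr Y, contradiction with u ∉ cl G Y
        exfalso
        have huY : u ∉ Y := fun h => hu.2 (Finset.mem_union_left _ h)
        exact hu.2 (Finset.mem_union_right _ ((hmem _ _).2 ⟨huY, v, hvY, hadj.symm⟩))
      · exact Finset.mem_union_right _ hvY
    · exact Finset.mem_union_left _ ((hmem _ _).2 ⟨hvX, u, hu.1, hadj⟩)
  have key : ∀ X Y Z : Finset V, S ∩ nbr G X = ∅ → S ∩ nbr G Y = ∅ →
      nbr G Z ⊆ nbr G X ∪ nbr G Y → S ∩ nbr G Z = ∅ := by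
    intro X Y Z hX hY hsub
    rw [Finset.eq_empty_iff_forall_notMem] at hX hY ⊢
    intro v hv
    rcases Finset.mem_inter.1 hv with ⟨hvS, hvZ⟩
    rcases Finset.mem_union.1 (hsub hvZ) with h | h
    · exact hX v (Finset.mem_inter.2 ⟨hvS, h⟩)
    · exact hY v (Finset.mem_inter.2 ⟨hvS, h⟩)
  obtain ⟨h1, h2⟩ := hF
  constructor
  · rintro X ⟨hXF, hXS⟩ Y ⟨hYF, hYS⟩
    rcases h1 X hXF Y hYF with ⟨ha, hb⟩ | ⟨ha, hb⟩
    · exact Or.inl ⟨⟨ha, key X Y _ hXS hYS (hinter X Y)⟩,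
        ⟨hb, key X Y _ hXS hYS (hunion X Y)⟩⟩
    · refine Or.inr ⟨⟨ha, key X Y _ hXS hYS (hdiff X Y)⟩,
        ⟨hb, key X Y _ hXS hYS ?_⟩⟩
      intro v hv
      rcases Finset.mem_union.1 (hdiff Y X hv) with h | h
      · exact Finset.mem_union_right _ h
      · exact Finset.mem_union_left _ h
  · rintro X ⟨hXF, hXS⟩ Y ⟨hYF, hYS⟩ hne
    obtain ⟨ha, hb⟩ := h2 X hXF Y hYF hne
    exact ⟨⟨ha, key X Y _ hXS hYS (hinter X Y)⟩,
      ⟨hb, key X Y _ hXS hYS (hunion X Y)⟩⟩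
end

section
/- Let G be the unit disk graph on a finite set V of points in the Euclidean plane. There do not exist a vertex v ∈ V and six sets X₁, …, X₆ ⊆ V such that v ∈ Γ(X_i) for each i = 1, …, 6 and X_i ∩ X_j⁺ = ∅ for all i ≠ j. Equivalently, if sets X₁, …, X_d ⊆ V pairwise satisfy X_i ∩ X_j⁺ = ∅ and some vertex v has a neighbor in each X_i, then d ≤ 5. -/
open Complex Real

lemma cos_arg_pair (z : Fin 6 → ℂ) :
    ∃ i j : Fin 6, i ≠ j ∧ (1:ℝ)/2 ≤ Real.cos ((z i).arg - (z j).arg) := by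
  set σ := Tuple.sort (fun i => (z i).arg) with hσ
  set φ : Fin 6 → ℝ := fun k => (z (σ k)).arg with hφ
  have hmono : Monotone φ := Tuple.monotone_sort (fun i => (z i).arg)
  have hπ := Real.pi_pos
  have hub : φ 5 ≤ Real.pi := Complex.arg_le_pi _
  have hlb : -Real.pi < φ 0 := Complex.neg_pi_lt_arg _
  have key : ∀ a b : Fin 6, a ≠ b → 0 ≤ φ a - φ b → φ a - φ b ≤ Real.pi/3 →
      ∃ i j : Fin 6, i ≠ j ∧ (1:ℝ)/2 ≤ Real.cos ((z i).arg - (z j).arg) := by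
    intro a b hab h0 h1
    refine ⟨σ a, σ b, fun h => hab (σ.injective h), ?_⟩
    have := Real.cos_le_cos_of_nonneg_of_le_pi h0 (by linarith) h1
    rw [Real.cos_pi_div_three] at this
    exact this
  have h6 : φ 1 - φ 0 ≤ Real.pi/3 ∨ φ 2 - φ 1 ≤ Real.pi/3 ∨ φ 3 - φ 2 ≤ Real.pi/3 ∨
      φ 4 - φ 3 ≤ Real.pi/3 ∨ φ 5 - φ 4 ≤ Real.pi/3 ∨ φ 0 + 2*Real.pi - φ 5 ≤ Real.pi/3 := by
    by_contra h; push_neg at h; obtain ⟨h1,h2,h3,h4,h5,h0⟩ := h; linarith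
  have m01 : φ 0 ≤ φ 1 := hmono (by decide)
  have m12 : φ 1 ≤ φ 2 := hmono (by decide)
  have m23 : φ 2 ≤ φ 3 := hmono (by decide)
  have m34 : φ 3 ≤ φ 4 := hmono (by decide)
  have m45 : φ 4 ≤ φ 5 := hmono (by decide)
  rcases h6 with h|h|h|h|h|h
  · exact key 1 0 (by decide) (by linarith) h
  · exact key 2 1 (by decide) (by linarith) h
  · exact key 3 2 (by decide) (by linarith) h
  · exact key 4 3 (by decide) (by linarith) h
  · exact key 5 4 (by decide) (by linarith) h
  · refine ⟨σ 0, σ 5, fun hc => by exact absurd (σ.injective hc) (by decide), ?_⟩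
    have hδ0 : 0 ≤ φ 0 + 2*Real.pi - φ 5 := by linarith
    have := Real.cos_le_cos_of_nonneg_of_le_pi hδ0 (by linarith) h
    rw [Real.cos_pi_div_three] at this
    have heq : Real.cos ((z (σ 0)).arg - (z (σ 5)).arg)
        = Real.cos (φ 0 + 2*Real.pi - φ 5) := by
      rw [show φ 0 + 2*Real.pi - φ 5 = (φ 0 - φ 5) + 2*Real.pi by ring, Real.cos_add_two_pi]
    rw [heq]; exact this

lemma six_points (z : Fin 6 → ℂ) (h1 : ∀ i, ‖z i‖ ≤ 1)
    (hd : ∀ i j : Fin 6, i ≠ j → 1 < ‖z i - z j‖) : False := by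
  have hne : ∀ i, z i ≠ 0 := by
    intro i hzi
    have h01 : (0 : Fin 6) ≠ 1 := by decide
    rcases eq_or_ne i 0 with rfl | hi
    · have := hd 1 0 (by decide); rw [hzi, sub_zero] at this; exact absurd (h1 1) (by linarith)
    · have := hd 0 i (Ne.symm hi); rw [hzi, sub_zero] at this; exact absurd (h1 0) (by linarith)
  obtain ⟨i, j, hij, hcos⟩ := cos_arg_pair z
  set a := ‖z i‖ with ha
  set b := ‖z j‖ with hb
  have ha0 : 0 < a := norm_pos_iff.mpr (hne i)
  have hb0 : 0 < b := norm_pos_iff.mpr (hne j)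
  have hrei : (z i).re = a * Real.cos (z i).arg := by
    have := Complex.cos_arg (hne i); rw [this, ha]; field_simp [norm_ne_zero_iff.mpr (hne i)]
  have himi : (z i).im = a * Real.sin (z i).arg := by
    have := Complex.sin_arg (z i); rw [this, ha]; field_simp [norm_ne_zero_iff.mpr (hne i)]
  have hrej : (z j).re = b * Real.cos (z j).arg := by
    have := Complex.cos_arg (hne j); rw [this, hb]; field_simp [norm_ne_zero_iff.mpr (hne j)]
  have himj : (z j).im = b * Real.sin (z j).arg := by
    have := Complex.sin_arg (z j); rw [this, hb]; field_simp [norm_ne_zero_iff.mpr (hne j)]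
  have hsq : ‖z i - z j‖ ^ 2
      = a^2 + b^2 - 2 * (a * b * Real.cos ((z i).arg - (z j).arg)) := by
    rw [Complex.sq_norm, Complex.normSq_sub]
    have : (z i * (starRingEnd ℂ) (z j)).re = a * b * Real.cos ((z i).arg - (z j).arg) := by
      simp [Complex.mul_re, Complex.conj_re, Complex.conj_im, hrei, himi, hrej, himj,
        Real.cos_sub]
      ring
    rw [this, Complex.sq_norm, Complex.sq_norm]
  have hdij := hd i j hij
  have h2 : 1 < ‖z i - z j‖ ^ 2 := by nlinarith
  nlinarith [h1 i, h1 j, hcos, mul_pos ha0 hb0, mul_nonneg (sub_nonneg.2 (h1 i)) (sub_nonneg.2 (h1 j))]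


theorem stmt_17 {V : Type*} [Fintype V] [DecidableEq V]
    (p : V → EuclideanSpace ℝ (Fin 2)) (hp : Function.Injective p)
    (G : SimpleGraph V) [DecidableRel G.Adj]
    (hG : ∀ u v : V, G.Adj u v ↔ u ≠ v ∧ dist (p u) (p v) ≤ 1) :
    ¬ ∃ (v : V) (X : Fin 6 → Finset V),
      (∀ i : Fin 6, v ∈ nbr G (X i)) ∧
      (∀ i j : Fin 6, i ≠ j → X i ∩ cl G (X j) = ∅) := by
  rintro ⟨v, X, hv, hdisj⟩
  -- extract neighbors
  have hv' : ∀ i : Fin 6, v ∉ X i ∧ ∃ u ∈ X i, G.Adj u v := by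
    intro i
    have := hv i
    simpa [nbr] using this
  choose hvnot u hu hadj using hv'
  -- isometry to ℂ
  set f : EuclideanSpace ℝ (Fin 2) ≃ₗᵢ[ℝ] ℂ := Complex.orthonormalBasisOneI.repr.symm with hf
  set z : Fin 6 → ℂ := fun i => f (p (u i)) - f (p v) with hz
  apply six_points z
  · intro i
    have hd1 : dist (p (u i)) (p v) ≤ 1 := ((hG (u i) v).1 (hadj i)).2
    have : ‖z i‖ = dist (p (u i)) (p v) := by
      rw [hz]
      rw [← Complex.dist_eq, f.dist_map]
    rw [this]; exact hd1
  · intro i j hij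
    -- u i ∉ cl G (X j)
    have hnotcl : u i ∉ cl G (X j) := by
      intro hmem
      have : u i ∈ X i ∩ cl G (X j) := Finset.mem_inter.2 ⟨hu i, hmem⟩
      rw [hdisj i j hij] at this
      exact absurd this (Finset.notMem_empty _)
    have hne : u i ≠ u j := by
      intro h
      exact hnotcl (Finset.mem_union_left _ (h ▸ hu j))
    have hnotX : u i ∉ X j := fun h => hnotcl (Finset.mem_union_left _ h)
    have hnadj : ¬ G.Adj (u j) (u i) := by
      intro h
      apply hnotcl
      apply Finset.mem_union_right
      simp only [nbr, Finset.mem_filter, Finset.mem_univ, true_and]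
      exact ⟨hnotX, u j, hu j, h⟩
    have hdist : 1 < dist (p (u j)) (p (u i)) := by
      by_contra h
      push_neg at h
      exact hnadj ((hG (u j) (u i)).2 ⟨Ne.symm hne, h⟩)
    have : ‖z i - z j‖ = dist (p (u i)) (p (u j)) := by
      have : z i - z j = f (p (u i)) - f (p (u j)) := by rw [hz]; ring
      rw [this, ← Complex.dist_eq, f.dist_map]
    rw [this, dist_comm]
    exact hdist
end

section
/- Let G be a finite simple graph with vertex set V, let m be a positive integer, and define sets I₁, …, I_m ⊆ V inductively by choosing I_i to be a maximal independent set of the subgraph of G induced by V \ (I₁ ∪ ⋯ ∪ I_{i−1}). Then for every i with 1 ≤ i ≤ m, the set I₁ ∪ ⋯ ∪ I_i is an i-dominating set of G: every vertex v ∈ V \ (I₁ ∪ ⋯ ∪ I_i) has at least i neighbors in I₁ ∪ ⋯ ∪ I_i. -/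
theorem stmt_18 {V : Type*} [Fintype V] [DecidableEq V]
    (G : SimpleGraph V) [DecidableRel G.Adj] (m : ℕ) (hm : 1 ≤ m)
    (I : ℕ → Finset V)
    -- for 1 ≤ i ≤ m, I i lies in V \ (I 1 ∪ ⋯ ∪ I (i-1))
    (hsub : ∀ i, 1 ≤ i → i ≤ m → ∀ v ∈ I i, v ∉ (Finset.Ico 1 i).biUnion I)
    -- I i is an independent set
    (hind : ∀ i, 1 ≤ i → i ≤ m → ∀ u ∈ I i, ∀ v ∈ I i, ¬ G.Adj u v)
    -- I i is a maximal independent set of the subgraph induced by V \ (I 1 ∪ ⋯ ∪ I (i-1))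
    (hmax : ∀ i, 1 ≤ i → i ≤ m → ∀ v : V, v ∉ (Finset.Ico 1 i).biUnion I → v ∉ I i →
      ∃ u ∈ I i, G.Adj u v) :
    -- I 1 ∪ ⋯ ∪ I i is an i-dominating set
    ∀ i, 1 ≤ i → i ≤ m → ∀ v : V, v ∉ (Finset.Icc 1 i).biUnion I →
      i ≤ (((Finset.Icc 1 i).biUnion I).filter (fun u => G.Adj v u)).card := by
  intro i hi him v hv
  have key : ∀ j, ∃ u, 1 ≤ j → j ≤ i → u ∈ I j ∧ G.Adj u v := by
    intro j
    by_cases hj : 1 ≤ j ∧ j ≤ i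
    · have h1 : v ∉ (Finset.Ico 1 j).biUnion I := by
        intro h
        apply hv
        rw [Finset.mem_biUnion] at h ⊢
        obtain ⟨k, hk, hk3⟩ := h
        rw [Finset.mem_Ico] at hk
        exact ⟨k, Finset.mem_Icc.mpr ⟨hk.1, by omega⟩, hk3⟩
      have h2 : v ∉ I j := fun h =>
        hv (Finset.mem_biUnion.mpr ⟨j, Finset.mem_Icc.mpr ⟨hj.1, hj.2⟩, h⟩)
      obtain ⟨u, hu, hadj⟩ := hmax j hj.1 (by omega) v h1 h2
      exact ⟨u, fun _ _ => ⟨hu, hadj⟩⟩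
    · exact ⟨v, fun h1 h2 => absurd ⟨h1, h2⟩ hj⟩
  choose f hf using key
  have hcard : (Finset.Icc 1 i).card ≤
      (((Finset.Icc 1 i).biUnion I).filter (fun u => G.Adj v u)).card := by
    apply Finset.card_le_card_of_injOn f
    · intro j hj
      rw [Finset.mem_coe, Finset.mem_Icc] at hj
      obtain ⟨hu, hadj⟩ := hf j hj.1 hj.2
      rw [Finset.mem_coe, Finset.mem_filter, Finset.mem_biUnion]
      exact ⟨⟨j, Finset.mem_Icc.mpr hj, hu⟩, hadj.symm⟩
    · have hkey : ∀ j k, 1 ≤ j → j ≤ i → 1 ≤ k → k ≤ i → j < k → f j ≠ f k := by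
        intro j k hj1 hj2 hk1 hk2 hlt heq
        have huj : f j ∈ I j := (hf j hj1 hj2).1
        have huk : f k ∈ I k := (hf k hk1 hk2).1
        apply hsub k hk1 (by omega) (f k) huk
        rw [Finset.mem_biUnion]
        exact ⟨j, Finset.mem_Ico.mpr ⟨hj1, hlt⟩, heq ▸ huj⟩
      intro j hj k hk heq
      rw [Finset.mem_coe, Finset.mem_Icc] at hj hk
      by_contra hne
      rcases lt_or_gt_of_ne hne with h | h
      · exact hkey j k hj.1 hj.2 hk.1 hk.2 h heq
      · exact hkey k j hk.1 hk.2 hj.1 hj.2 h heq.symm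
  simpa using hcard
end
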